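/- Let (λ, u) be an exact eigenpair of A and let i ∈ {1,…,m} be such that δ_i := min_{j≠i, 1≤j≤m} |μ̃_j − μ| > 0, where μ = 1/λ. Let E_m^{(i)} be the A-orthogonal projection onto span{ũ_i}. Then ‖u − E_m^{(i)} u‖₂ ≤ (1 + μ̃_1/δ_i) η_K · ‖u − E_m^{(i)} u‖_A. -/

import Mathlib

open Matrix

/-- The Euclidean (`L²`) norm on `ℝⁿ`: `‖x‖₂ = √(xᵀx)`. -/
noncomputable def l2N {n : ℕ} (x : Fin n → ℝ) : ℝ := Real.sqrt (x ⬝ᵥ x)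

/-- The energy norm induced by the matrix `A`: `‖x‖_A = √(xᵀAx)`. -/
noncomputable def aN {n : ℕ} (A : Matrix (Fin n) (Fin n) ℝ) (x : Fin n → ℝ) : ℝ :=
  Real.sqrt (x ⬝ᵥ (A *ᵥ x))

/-- `η_K = sup_{‖g‖₂ = 1} ‖(I - P_K) A⁻¹ g‖_A`, where `P` is the `A`-orthogonal
projection onto the subspace `K`. -/
noncomputable def etaK {n : ℕ} (A : Matrix (Fin n) (Fin n) ℝ)
    (P : (Fin n → ℝ) →ₗ[ℝ] (Fin n → ℝ)) : ℝ :=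
  sSup ((fun g => aN A ((A⁻¹ *ᵥ g) - P (A⁻¹ *ᵥ g))) '' {g | l2N g = 1})

section StmtAux

variable {n : ℕ}

lemma stmt4aux.dotnn (x : Fin n → ℝ) : 0 ≤ x ⬝ᵥ x :=
  Finset.sum_nonneg fun _ _ => mul_self_nonneg _

lemma stmt4aux.dotzero {x : Fin n → ℝ} (h : x ⬝ᵥ x = 0) : x = 0 := by
  funext i
  have h1 : ∀ j ∈ Finset.univ, 0 ≤ x j * x j := fun j _ => mul_self_nonneg _
  have h2 := (Finset.sum_eq_zero_iff_of_nonneg h1).1 h i (Finset.mem_univ i)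
  have := mul_self_eq_zero.1 h2
  simp [this]

lemma stmt4aux.dotCS (a b : Fin n → ℝ) : (a ⬝ᵥ b)^2 ≤ (a ⬝ᵥ a) * (b ⬝ᵥ b) := by
  simpa [dotProduct, sq] using Finset.sum_mul_sq_le_sq_mul_sq Finset.univ a b

lemma stmt4aux.symdot {A : Matrix (Fin n) (Fin n) ℝ} (hA : A.IsHermitian) (x y : Fin n → ℝ) :
    x ⬝ᵥ (A *ᵥ y) = (A *ᵥ x) ⬝ᵥ y := by
  have hs : Aᵀ = A := (by simpa [conjTranspose_eq_transpose_of_trivial] using hA : A.IsSymm).eq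
  rw [dotProduct_mulVec, ← mulVec_transpose, hs]

lemma stmt4aux.invdot {A : Matrix (Fin n) (Fin n) ℝ} (hA : A.PosDef) (x : Fin n → ℝ) :
    A *ᵥ (A⁻¹ *ᵥ x) = x := by
  rw [mulVec_mulVec, mul_nonsing_inv _ hA.det_pos.ne'.isUnit, one_mulVec]

lemma stmt4aux.sumdot {m : ℕ} (f : Fin m → (Fin n → ℝ)) (v : Fin n → ℝ) :
    (∑ j, f j) ⬝ᵥ v = ∑ j, (f j ⬝ᵥ v) := by
  simp only [dotProduct, Finset.sum_apply, Finset.sum_mul]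
  exact Finset.sum_comm

/-- Bessel's inequality for a `⬝ᵥ`-orthonormal finite family. -/
lemma stmt4aux.besselDot {m : ℕ} (v : Fin m → (Fin n → ℝ))
    (hv : ∀ j k, v j ⬝ᵥ v k = if j = k then (1:ℝ) else 0) (x : Fin n → ℝ) :
    ∑ j, (v j ⬝ᵥ x)^2 ≤ x ⬝ᵥ x := by
  let v' : Fin m → EuclideanSpace ℝ (Fin n) := fun j => WithLp.toLp 2 (v j)
  let x' : EuclideanSpace ℝ (Fin n) := WithLp.toLp 2 x
  have hip : ∀ j, @inner ℝ _ _ (v' j) x' = v j ⬝ᵥ x := by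
    intro j
    simp [v', x', PiLp.inner_apply, RCLike.inner_apply, dotProduct, mul_comm]
  have hON : Orthonormal ℝ v' := by
    rw [orthonormal_iff_ite]
    intro j k
    simpa [v', PiLp.inner_apply, RCLike.inner_apply, dotProduct, mul_comm] using hv j k
  have h := hON.sum_inner_products_le (x := x') (s := Finset.univ)
  have hn2 : ‖x'‖^2 = x ⬝ᵥ x := by
    rw [EuclideanSpace.norm_eq, Real.sq_sqrt (by positivity)]
    simp [x', dotProduct, sq]
  rw [hn2] at h
  simp only [hip, Real.norm_eq_abs, sq_abs] at h
  exact h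

lemma stmt4aux.aN_smul (A : Matrix (Fin n) (Fin n) ℝ) (s : ℝ) (x : Fin n → ℝ) :
    aN A (s • x) = |s| * aN A x := by
  unfold aN
  rw [mulVec_smul, dotProduct_smul, smul_dotProduct, smul_eq_mul, smul_eq_mul,
    ← mul_assoc, ← sq, Real.sqrt_mul (sq_nonneg s), Real.sqrt_sq_eq_abs]

lemma stmt4aux.l2N_smul (s : ℝ) (x : Fin n → ℝ) : l2N (s • x) = |s| * l2N x := by
  unfold l2N
  rw [dotProduct_smul, smul_dotProduct, smul_eq_mul, smul_eq_mul,
    ← mul_assoc, ← sq, Real.sqrt_mul (sq_nonneg s), Real.sqrt_sq_eq_abs]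

open scoped MatrixOrder in
lemma stmt4aux.csA {A : Matrix (Fin n) (Fin n) ℝ} (hA : A.PosDef) (x y : Fin n → ℝ) :
    |x ⬝ᵥ (A *ᵥ y)| ≤ aN A x * aN A y := by
  set S := CFC.sqrt A with hSdef
  have hSS : S * S = A := CFC.sqrt_mul_sqrt_self A hA.posSemidef.nonneg
  have hSH : S.IsHermitian := (CFC.sqrt_nonneg A).posSemidef.1
  have key : ∀ a b : Fin n → ℝ, a ⬝ᵥ (A *ᵥ b) = (S *ᵥ a) ⬝ᵥ (S *ᵥ b) := by
    intro a b
    rw [← hSS, ← mulVec_mulVec, stmt4aux.symdot hSH]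
  have hx : aN A x = Real.sqrt ((S *ᵥ x) ⬝ᵥ (S *ᵥ x)) := by rw [aN, key]
  have hy : aN A y = Real.sqrt ((S *ᵥ y) ⬝ᵥ (S *ᵥ y)) := by rw [aN, key]
  rw [key, hx, hy]
  have h1 := stmt4aux.dotCS (S *ᵥ x) (S *ᵥ y)
  have h2 := Real.sqrt_le_sqrt h1
  rwa [Real.sqrt_sq_eq_abs, Real.sqrt_mul (stmt4aux.dotnn _)] at h2

lemma stmt4aux.contdot (A : Matrix (Fin n) (Fin n) ℝ) :
    Continuous (fun y : Fin n → ℝ => y ⬝ᵥ (A *ᵥ y)) := by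
  unfold dotProduct mulVec
  apply continuous_finset_sum
  intro i _
  apply Continuous.mul (continuous_apply i)
  apply continuous_finset_sum
  intro j _
  exact continuous_const.mul (continuous_apply j)

lemma stmt4aux.contaN (A : Matrix (Fin n) (Fin n) ℝ) :
    Continuous (fun y : Fin n → ℝ => aN A y) := by
  unfold aN
  exact Real.continuous_sqrt.comp (stmt4aux.contdot A)

lemma stmt4aux.contl2N : Continuous (fun y : Fin n → ℝ => l2N y) := by
  have := stmt4aux.contaN (1 : Matrix (Fin n) (Fin n) ℝ)
  simpa [aN, l2N] using this

lemma stmt4aux.sphere_compact : IsCompact {g : Fin n → ℝ | l2N g = 1} := by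
  refine Metric.isCompact_of_isClosed_isBounded
    (isClosed_eq stmt4aux.contl2N continuous_const) ?_
  rw [isBounded_iff_forall_norm_le]
  refine ⟨1, fun x hx => ?_⟩
  have hx' : x ⬝ᵥ x = 1 := by
    have h0 : (0:ℝ) ≤ x ⬝ᵥ x := stmt4aux.dotnn x
    have h1 := hx
    simp only [Set.mem_setOf_eq, l2N] at h1
    nlinarith [Real.sq_sqrt h0, h1]
  rw [pi_norm_le_iff_of_nonneg (by norm_num)]
  intro i
  rw [Real.norm_eq_abs, abs_le]
  have hterm : x i * x i ≤ 1 := by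
    rw [← hx']
    exact Finset.single_le_sum (f := fun j => x j * x j)
      (fun j _ => mul_self_nonneg _) (Finset.mem_univ i)
  constructor <;> nlinarith

lemma stmt4aux.eta_bdd (A : Matrix (Fin n) (Fin n) ℝ) (P : (Fin n → ℝ) →ₗ[ℝ] (Fin n → ℝ)) :
    BddAbove ((fun g => aN A ((A⁻¹ *ᵥ g) - P (A⁻¹ *ᵥ g))) '' {g | l2N g = 1}) := by
  have hL : Continuous (fun g : Fin n → ℝ => (A⁻¹ *ᵥ g) - P (A⁻¹ *ᵥ g)) :=
    ((A⁻¹).mulVecLin - P ∘ₗ (A⁻¹).mulVecLin).continuous_of_finiteDimensional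
  exact ((stmt4aux.sphere_compact).image ((stmt4aux.contaN A).comp hL)).bddAbove

end StmtAux

open stmt4aux in
/-- `L²`-norm versus energy-norm error estimate for the subspace projection
method (second part of Theorem 3.1):
`‖u − E_m^{(i)} u‖₂ ≤ (1 + μ̃_1/δ_i) η_K ‖u − E_m^{(i)} u‖_A`. -/
theorem stmt4 {n m : ℕ} (A : Matrix (Fin n) (Fin n) ℝ) (hA : A.PosDef)
    -- `K` is an `m`-dimensional subspace of `ℝⁿ`
    (K : Submodule ℝ (Fin n → ℝ)) (hK : Module.finrank ℝ K = m)
    -- `P` is the `A`-orthogonal (Galerkin) projection onto `K`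
    (P : (Fin n → ℝ) →ₗ[ℝ] (Fin n → ℝ))
    (hPmem : ∀ x, P x ∈ K)
    (hPproj : ∀ x, ∀ y ∈ K, (P x) ⬝ᵥ (A *ᵥ y) = x ⬝ᵥ (A *ᵥ y))
    -- the Ritz pairs `(λ̃_j, ũ_j)` of `A` on `K`, with `A`-orthonormal Ritz vectors
    (tlam : Fin m → ℝ) (tu : Fin m → (Fin n → ℝ)) (htmono : Monotone tlam)
    (htu : ∀ j, tu j ∈ K)
    (hRitz : ∀ j, ∀ v ∈ K, ((A *ᵥ tu j) - tlam j • tu j) ⬝ᵥ v = 0)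
    (htortho : ∀ i j, tu i ⬝ᵥ (A *ᵥ tu j) = if i = j then (1 : ℝ) else 0)
    -- `(λ, u)` is an exact eigenpair of `A`
    (lam : ℝ) (u : Fin n → ℝ) (hu : u ≠ 0) (heig : A *ᵥ u = lam • u)
    -- `δ_i > 0` is (a lower bound for) `min_{j ≠ i} |μ̃_j − μ|` where `μ = 1/λ`, `μ̃_j = 1/λ̃_j`
    (i : Fin m) (δ : ℝ) (hδpos : 0 < δ)
    (hδ : ∀ j : Fin m, j ≠ i → δ ≤ |1 / tlam j - 1 / lam|)
    -- `E` is the `A`-orthogonal projection `E_m^{(i)}` onto `span{ũ_i}`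
    (E : (Fin n → ℝ) →ₗ[ℝ] (Fin n → ℝ))
    (hEmem : ∀ x, E x ∈ Submodule.span ℝ {tu i})
    (hEproj : ∀ x, ∀ y ∈ Submodule.span ℝ {tu i},
      (E x) ⬝ᵥ (A *ᵥ y) = x ⬝ᵥ (A *ᵥ y)) :
    l2N (u - E u) ≤
      (1 + (1 / tlam ⟨0, i.pos⟩) / δ) * etaK A P * aN A (u - E u) := by
  classical
  have hAH : A.IsHermitian := hA.1
  have hsym : ∀ x y : Fin n → ℝ, x ⬝ᵥ (A *ᵥ y) = (A *ᵥ x) ⬝ᵥ y := symdot hAH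
  have hinv : ∀ x : Fin n → ℝ, A *ᵥ (A⁻¹ *ᵥ x) = x := invdot hA
  have hq : ∀ x : Fin n → ℝ, x ≠ 0 → 0 < x ⬝ᵥ (A *ᵥ x) := by
    intro x hx; simpa using hA.dotProduct_mulVec_pos hx
  have hq0 : ∀ x : Fin n → ℝ, 0 ≤ x ⬝ᵥ (A *ᵥ x) := by
    intro x
    by_cases hx : x = 0
    · simp [hx]
    · exact (hq x hx).le
  have haNsq : ∀ x : Fin n → ℝ, aN A x ^ 2 = x ⬝ᵥ (A *ᵥ x) := fun x => Real.sq_sqrt (hq0 x)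
  have hl2sq : ∀ x : Fin n → ℝ, l2N x ^ 2 = x ⬝ᵥ x := fun x => Real.sq_sqrt (dotnn x)
  have haNnn : ∀ x : Fin n → ℝ, 0 ≤ aN A x := fun _ => Real.sqrt_nonneg _
  have hl2nn : ∀ x : Fin n → ℝ, 0 ≤ l2N x := fun _ => Real.sqrt_nonneg _
  set i0 : Fin m := ⟨0, i.pos⟩ with hi0
  set e : Fin n → ℝ := u - E u with he
  set η := etaK A P with hηdef
  -- eta facts
  have hbdd := eta_bdd A P
  have hmn : m ≤ n := by
    have h1 := Submodule.finrank_le K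
    rw [hK, Module.finrank_fin_fun] at h1
    exact h1
  have hn : 0 < n := lt_of_lt_of_le i.pos hmn
  have hη0 : 0 ≤ η := by
    have hg0 : l2N (Pi.single (⟨0, hn⟩ : Fin n) (1:ℝ)) = 1 := by
      have : (Pi.single (⟨0, hn⟩ : Fin n) (1:ℝ)) ⬝ᵥ (Pi.single (⟨0, hn⟩ : Fin n) (1:ℝ)) = 1 := by
        simp [dotProduct, Pi.single_apply]
      rw [l2N, this, Real.sqrt_one]
    have hle := le_csSup hbdd ⟨_, hg0, rfl⟩
    exact le_trans (Real.sqrt_nonneg _) hle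
  have hηle : ∀ x : Fin n → ℝ, aN A ((A⁻¹ *ᵥ x) - P (A⁻¹ *ᵥ x)) ≤ η * l2N x := by
    intro x
    by_cases hx : x = 0
    · simp [hx, aN, l2N, Real.sqrt_zero]
    · have hxx : 0 < x ⬝ᵥ x := by
        rcases lt_or_eq_of_le (dotnn x) with h | h
        · exact h
        · exact absurd (dotzero h.symm) hx
      have ht0 : 0 < l2N x := Real.sqrt_pos.2 hxx
      set t := l2N x with htdef
      have hgmem : l2N (t⁻¹ • x) = 1 := by
        rw [l2N_smul, abs_of_pos (inv_pos.2 ht0)]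
        field_simp
        exact htdef.symm
      have hveq : (A⁻¹ *ᵥ (t⁻¹ • x)) - P (A⁻¹ *ᵥ (t⁻¹ • x))
          = t⁻¹ • ((A⁻¹ *ᵥ x) - P (A⁻¹ *ᵥ x)) := by
        rw [mulVec_smul, P.map_smul, smul_sub]
      have hle := le_csSup hbdd ⟨t⁻¹ • x, hgmem, rfl⟩
      simp only [hveq, aN_smul, abs_of_pos (inv_pos.2 ht0)] at hle
      calc aN A ((A⁻¹ *ᵥ x) - P (A⁻¹ *ᵥ x))
          = t * (t⁻¹ * aN A ((A⁻¹ *ᵥ x) - P (A⁻¹ *ᵥ x))) := by field_simp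
        _ ≤ t * η := by exact mul_le_mul_of_nonneg_left hle ht0.le
        _ = η * l2N x := by rw [mul_comm]
  -- Ritz spectral facts
  have h3 : ∀ j k, tlam j * (tu j ⬝ᵥ tu k) = (if j = k then (1:ℝ) else 0) := by
    intro j k
    have h := hRitz j (tu k) (htu k)
    rw [sub_dotProduct, smul_dotProduct, smul_eq_mul, sub_eq_zero] at h
    rw [← h, ← hsym, htortho j k]
  have htlam_pos : ∀ j, 0 < tlam j := by
    intro j
    have h := h3 j j
    rw [if_pos rfl] at h
    nlinarith [dotnn (tu j)]
  have htuu : ∀ j k, tu j ⬝ᵥ tu k = if j = k then 1/tlam j else 0 := by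
    intro j k
    have h := h3 j k
    have hne := (htlam_pos j).ne'
    by_cases hjk : j = k
    · rw [if_pos hjk] at h ⊢
      rw [eq_div_iff hne]
      linear_combination h
    · rw [if_neg hjk] at h ⊢
      exact (mul_eq_zero.1 h).resolve_left hne
  have hRitz' : ∀ j, ∀ v ∈ K, tu j ⬝ᵥ (A *ᵥ v) = tlam j * (tu j ⬝ᵥ v) := by
    intro j v hv
    have h := hRitz j v hv
    rw [sub_dotProduct, smul_dotProduct, smul_eq_mul, sub_eq_zero] at h
    rw [hsym, h]
  -- span facts
  have hli : LinearIndependent ℝ tu := by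
    rw [Fintype.linearIndependent_iff]
    intro g hg k
    have h1 := congrArg (fun z => z ⬝ᵥ (A *ᵥ tu k)) hg
    simp only [sumdot, zero_dotProduct] at h1
    rw [Finset.sum_congr rfl (fun j _ => by
      rw [smul_dotProduct, smul_eq_mul, htortho j k])] at h1
    simpa [Finset.sum_ite_eq'] using h1
  have hspan : K = Submodule.span ℝ (Set.range tu) := by
    have hsub : Submodule.span ℝ (Set.range tu) ≤ K := by
      rw [Submodule.span_le]
      rintro x ⟨j, rfl⟩
      exact htu j
    refine (Submodule.eq_of_le_of_finrank_le hsub ?_).symm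
    rw [hK, finrank_span_eq_card hli, Fintype.card_fin]
  have hmemspan : ∀ x ∈ K, ∃ g : Fin m → ℝ, ∑ j, g j • tu j = x := by
    intro x hx
    rw [hspan] at hx
    exact (Submodule.mem_span_range_iff_exists_fun ℝ).1 hx
  have hzeroK : ∀ x ∈ K, (∀ v ∈ K, x ⬝ᵥ (A *ᵥ v) = 0) → x = 0 := by
    intro x hx h
    by_contra hne
    exact absurd (h x hx) (hq x hne).ne'
  have hPA : ∀ j, P (A⁻¹ *ᵥ tu j) = (1/tlam j) • tu j := by
    intro j
    have hd : P (A⁻¹ *ᵥ tu j) - (1/tlam j) • tu j = 0 := by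
      apply hzeroK _ (Submodule.sub_mem K (hPmem _) (Submodule.smul_mem K _ (htu j)))
      intro v hv
      rw [sub_dotProduct, smul_dotProduct, smul_eq_mul, hPproj _ v hv, hsym, hinv,
        hRitz' j v hv, one_div, inv_mul_cancel_left₀ (htlam_pos j).ne', sub_self]
    exact sub_eq_zero.1 hd
  -- the coefficient sequences
  set a : Fin m → ℝ := fun j => e ⬝ᵥ (A *ᵥ tu j) with hadef
  set b : Fin m → ℝ := fun j => e ⬝ᵥ tu j with hbdef
  set c : Fin m → ℝ := fun j => (e - P e) ⬝ᵥ tu j with hcdef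
  have hlam0 : 0 < lam := by
    have h1 := hq u hu
    rw [heig, dotProduct_smul, smul_eq_mul] at h1
    nlinarith [dotnn u]
  obtain ⟨cE, hcE⟩ := Submodule.mem_span_singleton.1 (hEmem u)
  have hai : a i = 0 := by
    show (u - E u) ⬝ᵥ (A *ᵥ tu i) = 0
    rw [sub_dotProduct, hEproj u (tu i) (Submodule.mem_span_singleton_self _), sub_self]
  have hbj : ∀ j, j ≠ i → b j = (1/lam) * a j := by
    intro j hj
    have h1 : E u ⬝ᵥ tu j = 0 := by
      rw [← hcE, smul_dotProduct, smul_eq_mul, htuu i j, if_neg (fun h => hj h.symm), mul_zero]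
    have h2 : u ⬝ᵥ (A *ᵥ tu j) = lam * (u ⬝ᵥ tu j) := by
      rw [hsym, heig, smul_dotProduct, smul_eq_mul]
    have h3' : E u ⬝ᵥ (A *ᵥ tu j) = 0 := by
      rw [← hcE, smul_dotProduct, smul_eq_mul, htortho i j, if_neg (fun h => hj h.symm), mul_zero]
    have h4 : a j = u ⬝ᵥ (A *ᵥ tu j) := by
      show (u - E u) ⬝ᵥ (A *ᵥ tu j) = _
      rw [sub_dotProduct, h3', sub_zero]
    show (u - E u) ⬝ᵥ tu j = _
    rw [sub_dotProduct, h1, sub_zero, h4, h2, ← mul_assoc, one_div,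
      inv_mul_cancel₀ hlam0.ne', one_mul]
  have hPe : ∀ j, P e ⬝ᵥ tu j = (1/tlam j) * a j := by
    intro j
    have h1 : P (A⁻¹ *ᵥ tu j) ⬝ᵥ (A *ᵥ P e) = P e ⬝ᵥ tu j := by
      rw [hPproj _ _ (hPmem e), hsym, hinv, dotProduct_comm]
    have h2 : P (A⁻¹ *ᵥ tu j) ⬝ᵥ (A *ᵥ P e) = (1/tlam j) * a j := by
      rw [hPA j, smul_dotProduct, smul_eq_mul]
      congr 1
      rw [hsym, dotProduct_comm]
      exact hPproj e (tu j) (htu j)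
    rw [← h1, h2]
  have hcj : ∀ j, j ≠ i → c j = (1/lam - 1/tlam j) * a j := by
    intro j hj
    show (e - P e) ⬝ᵥ tu j = _
    rw [sub_dotProduct, hPe j]
    have : e ⬝ᵥ tu j = b j := rfl
    rw [this, hbj j hj]
    ring
  -- decomposition of `e ⬝ᵥ e`
  have hew : e ⬝ᵥ (A *ᵥ (P (A⁻¹ *ᵥ e))) = ∑ j, b j * a j := by
    obtain ⟨g, hg⟩ := hmemspan _ (hPmem (A⁻¹ *ᵥ e))
    have hgk : ∀ k, g k = b k := by
      intro k
      have h1 : P (A⁻¹ *ᵥ e) ⬝ᵥ (A *ᵥ tu k) = b k := by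
        rw [hPproj _ _ (htu k), hsym, hinv]
      have h2 : P (A⁻¹ *ᵥ e) ⬝ᵥ (A *ᵥ tu k) = g k := by
        rw [← hg, sumdot]
        rw [Finset.sum_congr rfl (fun j _ => by
          rw [smul_dotProduct, smul_eq_mul, htortho j k])]
        simp [Finset.sum_ite_eq']
      rw [← h2, h1]
    rw [hsym, ← hg, dotProduct_comm, sumdot]
    refine Finset.sum_congr rfl (fun j _ => ?_)
    rw [smul_dotProduct, smul_eq_mul, hgk j, dotProduct_comm, ← hsym e (tu j)]
  have hmain : e ⬝ᵥ e = e ⬝ᵥ (A *ᵥ ((A⁻¹ *ᵥ e) - P (A⁻¹ *ᵥ e))) + ∑ j, b j * a j := by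
    have h0 : e ⬝ᵥ e = e ⬝ᵥ (A *ᵥ (A⁻¹ *ᵥ e)) := by rw [hinv]
    have hsplit : A⁻¹ *ᵥ e = ((A⁻¹ *ᵥ e) - P (A⁻¹ *ᵥ e)) + P (A⁻¹ *ᵥ e) := (sub_add_cancel _ _).symm
    rw [h0]
    nth_rewrite 1 [hsplit]
    rw [mulVec_add, dotProduct_add, hew]
  -- first term bound
  have hterm1 : e ⬝ᵥ (A *ᵥ ((A⁻¹ *ᵥ e) - P (A⁻¹ *ᵥ e))) ≤ aN A e * (η * l2N e) := by
    calc e ⬝ᵥ (A *ᵥ ((A⁻¹ *ᵥ e) - P (A⁻¹ *ᵥ e)))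
        ≤ |e ⬝ᵥ (A *ᵥ ((A⁻¹ *ᵥ e) - P (A⁻¹ *ᵥ e)))| := le_abs_self _
      _ ≤ aN A e * aN A ((A⁻¹ *ᵥ e) - P (A⁻¹ *ᵥ e)) := csA hA e _
      _ ≤ aN A e * (η * l2N e) := mul_le_mul_of_nonneg_left (hηle e) (haNnn e)
  -- weighted Bessel inequality
  have hbessel : ∀ x : Fin n → ℝ, ∑ j, (x ⬝ᵥ tu j)^2 ≤ (1/tlam i0) * (x ⬝ᵥ x) := by
    intro x
    set v : Fin m → (Fin n → ℝ) := fun j => Real.sqrt (tlam j) • tu j with hv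
    have hvON : ∀ j k, v j ⬝ᵥ v k = if j = k then (1:ℝ) else 0 := by
      intro j k
      rw [hv]
      simp only [smul_dotProduct, dotProduct_smul, smul_eq_mul]
      rw [htuu j k]
      split_ifs with hjk
      · subst hjk
        rw [← mul_assoc, Real.mul_self_sqrt (htlam_pos j).le, mul_one_div,
          div_self (htlam_pos j).ne']
      · ring
    have hB := besselDot v hvON x
    have hterm : ∀ j, (x ⬝ᵥ tu j)^2 ≤ (1/tlam i0) * (v j ⬝ᵥ x)^2 := by
      intro j
      have h1 : v j ⬝ᵥ x = Real.sqrt (tlam j) * (x ⬝ᵥ tu j) := by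
        rw [hv]
        simp only [smul_dotProduct, smul_eq_mul]
        rw [dotProduct_comm]
      have h2 : (v j ⬝ᵥ x)^2 = tlam j * (x ⬝ᵥ tu j)^2 := by
        rw [h1, mul_pow, Real.sq_sqrt (htlam_pos j).le]
      rw [h2, ← mul_assoc]
      have hmono : tlam i0 ≤ tlam j := htmono (by
        rw [hi0]
        exact Fin.mk_le_of_le_val (Nat.zero_le _))
      have h0 := htlam_pos i0
      have hj := htlam_pos j
      have hc1 : (1:ℝ) ≤ 1/tlam i0 * tlam j := by
        rw [one_div, inv_mul_eq_div, le_div_iff₀ h0, one_mul]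
        exact hmono
      nlinarith [sq_nonneg (x ⬝ᵥ tu j)]
    calc ∑ j, (x ⬝ᵥ tu j)^2 ≤ ∑ j, (1/tlam i0) * (v j ⬝ᵥ x)^2 :=
          Finset.sum_le_sum (fun j _ => hterm j)
      _ = (1/tlam i0) * ∑ j, (v j ⬝ᵥ x)^2 := by rw [Finset.mul_sum]
      _ ≤ (1/tlam i0) * (x ⬝ᵥ x) := by
          apply mul_le_mul_of_nonneg_left hB
          have := htlam_pos i0
          positivity
  -- A-orthogonality of e - P e to K
  have horth : ∀ y ∈ K, (e - P e) ⬝ᵥ (A *ᵥ y) = 0 := by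
    intro y hy
    rw [sub_dotProduct, hPproj e y hy, sub_self]
  -- contraction
  have hcontr : aN A (e - P e) ≤ aN A e := by
    have h2 : (e - P e) ⬝ᵥ (A *ᵥ P e) = 0 := horth _ (hPmem e)
    have h3 : P e ⬝ᵥ (A *ᵥ (e - P e)) = 0 := by
      rw [hsym, dotProduct_comm]
      exact h2
    have h1 : e ⬝ᵥ (A *ᵥ e) = (e - P e) ⬝ᵥ (A *ᵥ (e - P e)) + P e ⬝ᵥ (A *ᵥ P e) := by
      have h4 : e ⬝ᵥ (A *ᵥ e) = ((e - P e) + P e) ⬝ᵥ (A *ᵥ ((e - P e) + P e)) := by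
        rw [sub_add_cancel]
      rw [h4, mulVec_add, dotProduct_add, add_dotProduct, add_dotProduct, h2, h3]
      ring
    have h5 : (e - P e) ⬝ᵥ (A *ᵥ (e - P e)) ≤ e ⬝ᵥ (A *ᵥ e) := by
      rw [h1]
      have := hq0 (P e)
      linarith
    exact Real.sqrt_le_sqrt h5
  -- l2 norm of e - P e
  have hzb : l2N (e - P e) ≤ η * aN A e := by
    have h2 : (e - P e) ⬝ᵥ (A *ᵥ (P (A⁻¹ *ᵥ (e - P e)))) = 0 := horth _ (hPmem _)
    have h1 : (e - P e) ⬝ᵥ (e - P e)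
        = (e - P e) ⬝ᵥ (A *ᵥ ((A⁻¹ *ᵥ (e - P e)) - P (A⁻¹ *ᵥ (e - P e)))) := by
      have h3 : (e - P e) ⬝ᵥ (e - P e) = (e - P e) ⬝ᵥ (A *ᵥ (A⁻¹ *ᵥ (e - P e))) := by
        rw [hinv]
      have h4 : A⁻¹ *ᵥ (e - P e)
          = ((A⁻¹ *ᵥ (e - P e)) - P (A⁻¹ *ᵥ (e - P e))) + P (A⁻¹ *ᵥ (e - P e)) :=
        (sub_add_cancel _ _).symm
      rw [h3]
      nth_rewrite 1 [h4]
      rw [mulVec_add, dotProduct_add, h2, add_zero]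
    have h5 : (e - P e) ⬝ᵥ (e - P e) ≤ aN A e * (η * l2N (e - P e)) := by
      rw [h1]
      calc (e - P e) ⬝ᵥ (A *ᵥ ((A⁻¹ *ᵥ (e - P e)) - P (A⁻¹ *ᵥ (e - P e))))
          ≤ |(e - P e) ⬝ᵥ (A *ᵥ ((A⁻¹ *ᵥ (e - P e)) - P (A⁻¹ *ᵥ (e - P e))))| := le_abs_self _
        _ ≤ aN A (e - P e) * aN A ((A⁻¹ *ᵥ (e - P e)) - P (A⁻¹ *ᵥ (e - P e))) := csA hA _ _
        _ ≤ aN A e * (η * l2N (e - P e)) := by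
            apply mul_le_mul hcontr (hηle _) (haNnn _) (haNnn e)
    rcases eq_or_lt_of_le (hl2nn (e - P e)) with h | h
    · rw [← h]
      exact mul_nonneg hη0 (haNnn e)
    · have h6 : l2N (e - P e) * l2N (e - P e) ≤ (η * aN A e) * l2N (e - P e) := by
        have h7 := hl2sq (e - P e)
        nlinarith
      exact le_of_mul_le_mul_right h6 h
  -- bound for the sum
  have hsum : ∑ j, b j * a j ≤ (1/tlam i0)/δ * (η * (aN A e * l2N e)) := by
    have hsplit : ∑ j, b j * a j = ∑ j ∈ Finset.univ.erase i, b j * a j := by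
      refine (Finset.sum_erase _ ?_).symm
      rw [hai, mul_zero]
    have habs : ∀ j ∈ Finset.univ.erase i, b j * a j ≤ |b j| * (|c j| / δ) := by
      intro j hj
      have hji : j ≠ i := Finset.ne_of_mem_erase hj
      have hδj : δ ≤ |1/tlam j - 1/lam| := hδ j hji
      have hcj' := hcj j hji
      have h1 : δ * |a j| ≤ |c j| := by
        rw [hcj', abs_mul, abs_sub_comm]
        exact mul_le_mul_of_nonneg_right hδj (abs_nonneg _)
      have h2 : |a j| ≤ |c j| / δ := by
        rw [le_div_iff₀ hδpos]
        linarith [h1, mul_comm δ |a j|]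
      calc b j * a j ≤ |b j * a j| := le_abs_self _
        _ = |b j| * |a j| := abs_mul _ _
        _ ≤ |b j| * (|c j|/δ) := mul_le_mul_of_nonneg_left h2 (abs_nonneg _)
    have hCS : ∑ j ∈ Finset.univ.erase i, |b j| * (|c j|/δ)
        ≤ (1/δ) * (Real.sqrt (∑ j ∈ Finset.univ.erase i, (b j)^2)
          * Real.sqrt (∑ j ∈ Finset.univ.erase i, (c j)^2)) := by
      have h1 : ∑ j ∈ Finset.univ.erase i, |b j| * (|c j|/δ)
          = (1/δ) * ∑ j ∈ Finset.univ.erase i, |b j| * |c j| := by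
        rw [Finset.mul_sum]
        exact Finset.sum_congr rfl (fun j _ => by ring)
      rw [h1]
      apply mul_le_mul_of_nonneg_left _ (by positivity)
      have h2 := Finset.sum_mul_sq_le_sq_mul_sq (Finset.univ.erase i)
        (fun j => |b j|) (fun j => |c j|)
      simp only [sq_abs] at h2
      have h3 : 0 ≤ ∑ j ∈ Finset.univ.erase i, |b j| * |c j| :=
        Finset.sum_nonneg (fun j _ => mul_nonneg (abs_nonneg _) (abs_nonneg _))
      calc ∑ j ∈ Finset.univ.erase i, |b j| * |c j|
          = Real.sqrt ((∑ j ∈ Finset.univ.erase i, |b j| * |c j|)^2) := (Real.sqrt_sq h3).symm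
        _ ≤ Real.sqrt ((∑ j ∈ Finset.univ.erase i, (b j)^2)
            * ∑ j ∈ Finset.univ.erase i, (c j)^2) := Real.sqrt_le_sqrt h2
        _ = Real.sqrt (∑ j ∈ Finset.univ.erase i, (b j)^2)
            * Real.sqrt (∑ j ∈ Finset.univ.erase i, (c j)^2) := Real.sqrt_mul (by positivity) _
    have hbB : Real.sqrt (∑ j ∈ Finset.univ.erase i, (b j)^2)
        ≤ Real.sqrt (1/tlam i0) * l2N e := by
      have h1 : ∑ j ∈ Finset.univ.erase i, (b j)^2 ≤ ∑ j, (b j)^2 :=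
        Finset.sum_le_sum_of_subset_of_nonneg (Finset.subset_univ _) (fun _ _ _ => sq_nonneg _)
      have h2 := hbessel e
      have h3 : Real.sqrt (∑ j ∈ Finset.univ.erase i, (b j)^2)
          ≤ Real.sqrt ((1/tlam i0) * (e ⬝ᵥ e)) := Real.sqrt_le_sqrt (le_trans h1 h2)
      rwa [Real.sqrt_mul (by have := htlam_pos i0; positivity)] at h3
    have hcB : Real.sqrt (∑ j ∈ Finset.univ.erase i, (c j)^2)
        ≤ Real.sqrt (1/tlam i0) * (η * aN A e) := by
      have h1 : ∑ j ∈ Finset.univ.erase i, (c j)^2 ≤ ∑ j, (c j)^2 :=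
        Finset.sum_le_sum_of_subset_of_nonneg (Finset.subset_univ _) (fun _ _ _ => sq_nonneg _)
      have h2 := hbessel (e - P e)
      have h3 : Real.sqrt (∑ j ∈ Finset.univ.erase i, (c j)^2)
          ≤ Real.sqrt ((1/tlam i0) * ((e - P e) ⬝ᵥ (e - P e))) :=
        Real.sqrt_le_sqrt (le_trans h1 h2)
      rw [Real.sqrt_mul (by have := htlam_pos i0; positivity)] at h3
      refine le_trans h3 ?_
      apply mul_le_mul_of_nonneg_left _ (Real.sqrt_nonneg _)
      exact hzb
    have hs0 : (0:ℝ) ≤ Real.sqrt (1/tlam i0) := Real.sqrt_nonneg _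
    have hss : Real.sqrt (1/tlam i0) * Real.sqrt (1/tlam i0) = 1/tlam i0 :=
      Real.mul_self_sqrt (by have := htlam_pos i0; positivity)
    calc ∑ j, b j * a j = ∑ j ∈ Finset.univ.erase i, b j * a j := hsplit
      _ ≤ ∑ j ∈ Finset.univ.erase i, |b j| * (|c j|/δ) := Finset.sum_le_sum habs
      _ ≤ (1/δ) * (Real.sqrt (∑ j ∈ Finset.univ.erase i, (b j)^2)
          * Real.sqrt (∑ j ∈ Finset.univ.erase i, (c j)^2)) := hCS
      _ ≤ (1/δ) * ((Real.sqrt (1/tlam i0) * l2N e)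
          * (Real.sqrt (1/tlam i0) * (η * aN A e))) := by
          apply mul_le_mul_of_nonneg_left _ (by positivity)
          exact mul_le_mul hbB hcB (Real.sqrt_nonneg _)
            (mul_nonneg hs0 (hl2nn e))
      _ = (1/tlam i0)/δ * (η * (aN A e * l2N e)) := by
          rw [show (Real.sqrt (1/tlam i0) * l2N e) * (Real.sqrt (1/tlam i0) * (η * aN A e))
            = (Real.sqrt (1/tlam i0) * Real.sqrt (1/tlam i0)) * (l2N e * (η * aN A e)) from by
              ring, hss]
          ring
  -- put the pieces together
  have hfin : l2N e * l2N e ≤ ((1 + (1/tlam i0)/δ) * η * aN A e) * l2N e := by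
    have h0 : l2N e * l2N e = e ⬝ᵥ e := by rw [← sq]; exact hl2sq e
    rw [h0, hmain]
    calc e ⬝ᵥ (A *ᵥ ((A⁻¹ *ᵥ e) - P (A⁻¹ *ᵥ e))) + ∑ j, b j * a j
        ≤ aN A e * (η * l2N e) + (1/tlam i0)/δ * (η * (aN A e * l2N e)) :=
          add_le_add hterm1 hsum
      _ = ((1 + (1/tlam i0)/δ) * η * aN A e) * l2N e := by ring
  rcases eq_or_lt_of_le (hl2nn e) with h | h
  · rw [← h]
    have h1 : (0:ℝ) ≤ 1 + (1/tlam i0)/δ := by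
      have := htlam_pos i0
      positivity
    exact mul_nonneg (mul_nonneg h1 hη0) (haNnn e)
  · exact le_of_mul_le_mul_right hfin h
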